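/- For the path graph P_n on n ≥ 2 vertices: a_1(P_n) = 0, and for every k with 2 ≤ k ≤ n, a_k(P_n) = n + 1 − k. Equivalently, a(P_n; x) = Σ_{i=2}^{n} (n + 1 − i) x^i. -/
import Mathlib


open SimpleGraph Polynomial Finset

/-- `δ_S(v)`: the number of neighbors of `v` lying in the set `S`. -/
noncomputable def degIn {V : Type*} (G : SimpleGraph V) (S : Finset V) (v : V) : ℕ :=
  ((S : Set V) ∩ G.neighborSet v).ncard

/-- `δ(v)`: the degree of `v` in `G`. -/
noncomputable def degOf {V : Type*} (G : SimpleGraph V) (v : V) : ℕ :=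
  (G.neighborSet v).ncard

/-- `S` is a strong defensive alliance in `G`: `S` is nonempty and every `v ∈ S`
satisfies `2·δ_S(v) ≥ δ(v)`. -/
def IsStrongAlliance {V : Type*} (G : SimpleGraph V) (S : Finset V) : Prop :=
  S.Nonempty ∧ ∀ v ∈ S, degOf G v ≤ 2 * degIn G S v

/-- The alliances counted by the strong alliance polynomial: strong defensive alliances
whose induced subgraph is connected. -/
def IsCountedAlliance {V : Type*} (G : SimpleGraph V) (S : Finset V) : Prop :=
  IsStrongAlliance G S ∧ (G.induce (S : Set V)).Connected

/-- `a_k(G)`: the number of strong defensive alliances of cardinality `k` in `G`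
whose induced subgraph is connected. -/
noncomputable def aCoeff {V : Type*} (G : SimpleGraph V) (k : ℕ) : ℕ :=
  {S : Finset V | S.card = k ∧ IsCountedAlliance G S}.ncard

/-- The strong alliance polynomial `a(G;x) = Σ_k a_k(G) x^k`. -/
noncomputable def alliancePoly {V : Type*} [Fintype V] (G : SimpleGraph V) : Polynomial ℤ :=
  ∑ k ∈ Finset.range (Fintype.card V + 1), Polynomial.C (aCoeff G k : ℤ) * Polynomial.X ^ k

/-- the interval Finset from a (inclusive) of length k, in Fin n -/
def pIntv (n a k : ℕ) : Finset (Fin n) :=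
  Finset.univ.filter (fun v => a ≤ v.val ∧ v.val < a + k)

lemma mem_pIntv {n a k : ℕ} {v : Fin n} : v ∈ pIntv n a k ↔ a ≤ v.val ∧ v.val < a + k := by
  simp [pIntv]

lemma card_pIntv {n a k : ℕ} (h : a + k ≤ n) : (pIntv n a k).card = k := by
  have heq : (pIntv n a k).card = (Finset.Ico a (a + k)).card := by
    refine Finset.card_bij' (fun v _ => v.val) (fun m hm => ⟨m, by
      simp only [Finset.mem_Ico] at hm; omega⟩) ?_ ?_ ?_ ?_
    · intro v hv; rw [mem_pIntv] at hv; simp only [Finset.mem_Ico]; omega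
    · intro m hm; rw [mem_pIntv]; simp only [Finset.mem_Ico] at hm
      constructor <;> simp <;> omega
    · intro v hv; rfl
    · intro m hm; rfl
  rw [heq, Nat.card_Ico]; omega

lemma degOf_le_two {n : ℕ} (v : Fin n) : degOf (pathGraph n) v ≤ 2 := by
  have hsub : (pathGraph n).neighborSet v ⊆
      ({u : Fin n | u.val = v.val + 1} ∪ {u : Fin n | u.val + 1 = v.val}) := by
    intro u hu
    rw [mem_neighborSet, pathGraph_adj] at hu
    rcases hu with h | h
    · exact Or.inl (by simp only [Set.mem_setOf_eq]; omega)
    · exact Or.inr h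
  calc degOf (pathGraph n) v ≤ ({u : Fin n | u.val = v.val + 1} ∪ {u : Fin n | u.val + 1 = v.val}).ncard :=
        Set.ncard_le_ncard hsub (Set.toFinite _)
    _ ≤ ({u : Fin n | u.val = v.val + 1}).ncard + ({u : Fin n | u.val + 1 = v.val}).ncard :=
        Set.ncard_union_le _ _
    _ ≤ 1 + 1 := by
        gcongr
        · have : ({u : Fin n | u.val = v.val + 1}).Subsingleton := by
            intro a ha b hb; simp only [Set.mem_setOf_eq] at ha hb; exact Fin.ext (by omega)
          rcases this.eq_empty_or_singleton with h | ⟨x, h⟩ <;> simp [h]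
        · have : ({u : Fin n | u.val + 1 = v.val}).Subsingleton := by
            intro a ha b hb; simp only [Set.mem_setOf_eq] at ha hb; exact Fin.ext (by omega)
          rcases this.eq_empty_or_singleton with h | ⟨x, h⟩ <;> simp [h]
    _ = 2 := rfl

lemma degOf_pos {n : ℕ} (hn : 2 ≤ n) (v : Fin n) : 1 ≤ degOf (pathGraph n) v := by
  have : ((pathGraph n).neighborSet v).Nonempty := by
    by_cases h : v.val + 1 < n
    · exact ⟨⟨v.val + 1, h⟩, by rw [mem_neighborSet, pathGraph_adj]; left; rfl⟩
    · have hv1 : 1 ≤ v.val := by omega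
      refine ⟨⟨v.val - 1, by omega⟩, ?_⟩
      rw [mem_neighborSet, pathGraph_adj]
      right
      show v.val - 1 + 1 = v.val
      omega
  rw [degOf, ← Set.ncard_pos (Set.toFinite _)] at *
  exact this

lemma degIn_pos {n : ℕ} {S : Finset (Fin n)} {v u : Fin n} (hu : u ∈ S)
    (hadj : (pathGraph n).Adj v u) : 1 ≤ degIn (pathGraph n) S v := by
  have : ((S : Set (Fin n)) ∩ (pathGraph n).neighborSet v).Nonempty :=
    ⟨u, by simpa using hu, hadj⟩
  rw [degIn, ← Set.ncard_pos (Set.toFinite _)] at *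
  exact this

/-- intermediate value theorem for walks in the induced path graph -/
lemma walk_ivt {n : ℕ} {S : Set (Fin n)} {u v : ↥S}
    (p : ((pathGraph n).induce S).Walk u v) :
    ∀ c : Fin n, (u : Fin n).val ≤ c.val → c.val ≤ (v : Fin n).val → c ∈ S := by
  induction p with
  | @nil x =>
      intro c h1 h2
      have : c = (x : Fin n) := Fin.ext (by omega)
      rw [this]; exact x.2
  | @cons a b w h q ih =>
      intro c h1 h2
      have hadj : (pathGraph n).Adj (a : Fin n) (b : Fin n) := h
      rw [pathGraph_adj] at hadj
      rcases hadj with hab | hab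
      · by_cases hc : c.val = (a : Fin n).val
        · have : c = (a : Fin n) := Fin.ext hc
          rw [this]; exact a.2
        · exact ih c (by omega) h2
      · exact ih c (by omega) h2

lemma pIntv_connected {n a k : ℕ} (hk : 1 ≤ k) (h : a + k ≤ n) :
    ((pathGraph n).induce ((pIntv n a k : Finset (Fin n)) : Set (Fin n))).Connected := by
  have han : a < n := by omega
  have hamem : (⟨a, han⟩ : Fin n) ∈ pIntv n a k := by
    rw [mem_pIntv]; simp only [Fin.val_mk]; omega
  set v0 : ↥((pIntv n a k : Finset (Fin n)) : Set (Fin n)) := ⟨⟨a, han⟩, Finset.mem_coe.mpr hamem⟩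
  have key : ∀ d : ℕ, ∀ v : ↥((pIntv n a k : Finset (Fin n)) : Set (Fin n)),
      (v : Fin n).val = a + d → ((pathGraph n).induce _).Reachable v0 v := by
    intro d
    induction d with
    | zero =>
        intro v hv
        have : v = v0 := Subtype.ext (Fin.ext (by simpa using hv))
        rw [this]
    | succ d ih =>
        intro v hv
        have hvmem : (v : Fin n) ∈ pIntv n a k := Finset.mem_coe.mp v.2
        rw [mem_pIntv] at hvmem
        have hwn : a + d < n := by omega
        have hwmem : (⟨a + d, hwn⟩ : Fin n) ∈ pIntv n a k := by
          rw [mem_pIntv]; simp only [Fin.val_mk]; omega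
        set w : ↥((pIntv n a k : Finset (Fin n)) : Set (Fin n)) := ⟨⟨a + d, hwn⟩, Finset.mem_coe.mpr hwmem⟩
        have hadj : ((pathGraph n).induce _).Adj w v := by
          show (pathGraph n).Adj (w : Fin n) (v : Fin n)
          rw [pathGraph_adj]; left
          show a + d + 1 = (v : Fin n).val
          omega
        exact (ih w rfl).trans hadj.reachable
  haveI : Nonempty ↥((pIntv n a k : Finset (Fin n)) : Set (Fin n)) := ⟨v0⟩
  refine ⟨fun x y => ?_⟩
  have hx := key ((x : Fin n).val - a) x (by
    have hm := mem_pIntv.mp (Finset.mem_coe.mp x.2); omega)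
  have hy := key ((y : Fin n).val - a) y (by
    have hm := mem_pIntv.mp (Finset.mem_coe.mp y.2); omega)
  exact hx.symm.trans hy


lemma aCoeff_zero {n : ℕ} : aCoeff (pathGraph n) 0 = 0 := by
  have : {S : Finset (Fin n) | S.card = 0 ∧ IsCountedAlliance (pathGraph n) S} = ∅ := by
    ext S
    simp only [Set.mem_setOf_eq, Set.mem_empty_iff_false, iff_false, not_and]
    intro hcard h
    rcases h with ⟨⟨hne, _⟩, _⟩
    rw [Finset.card_eq_zero] at hcard
    exact (Finset.not_nonempty_empty (hcard ▸ hne))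
  rw [aCoeff, this, Set.ncard_empty]

lemma aCoeff_one {n : ℕ} (hn : 2 ≤ n) : aCoeff (pathGraph n) 1 = 0 := by
  have : {S : Finset (Fin n) | S.card = 1 ∧ IsCountedAlliance (pathGraph n) S} = ∅ := by
    ext S
    simp only [Set.mem_setOf_eq, Set.mem_empty_iff_false, iff_false, not_and]
    intro hcard h
    rcases h with ⟨⟨hne, hall⟩, _⟩
    rw [Finset.card_eq_one] at hcard
    obtain ⟨v, rfl⟩ := hcard
    have hdegIn : degIn (pathGraph n) {v} v = 0 := by
      rw [degIn]
      have : (({v} : Finset (Fin n)) : Set (Fin n)) ∩ (pathGraph n).neighborSet v = ∅ := by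
        ext u
        simp only [Finset.coe_singleton, Set.mem_inter_iff, Set.mem_singleton_iff,
          mem_neighborSet, Set.mem_empty_iff_false, iff_false, not_and]
        rintro rfl
        exact (pathGraph n).irrefl
      rw [this, Set.ncard_empty]
    have := hall v (Finset.mem_singleton_self v)
    rw [hdegIn] at this
    have := degOf_pos hn v
    omega
  rw [aCoeff, this, Set.ncard_empty]

lemma count_set_eq {n k : ℕ} (h2 : 2 ≤ k) (hkn : k ≤ n) :
    {S : Finset (Fin n) | S.card = k ∧ IsCountedAlliance (pathGraph n) S} =
      (fun a => pIntv n a k) '' (Set.Iio (n + 1 - k)) := by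
  ext S
  simp only [Set.mem_setOf_eq, Set.mem_image, Set.mem_Iio]
  constructor
  · rintro ⟨hcard, ⟨⟨hne, hall⟩, hconn⟩⟩
    set u := S.min' hne with hu
    set w := S.max' hne with hw
    have umem : u ∈ S := S.min'_mem hne
    have wmem : w ∈ S := S.max'_mem hne
    have hbounds : ∀ v ∈ S, u.val ≤ v.val ∧ v.val ≤ w.val := by
      intro v hv
      exact ⟨Fin.le_def.mp (S.min'_le v hv), Fin.le_def.mp (S.le_max' v hv)⟩
    have huw : u.val ≤ w.val := (hbounds u umem).2
    obtain ⟨p⟩ := hconn.preconnected ⟨u, Finset.mem_coe.mpr umem⟩ ⟨w, Finset.mem_coe.mpr wmem⟩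
    have hin : ∀ c : Fin n, u.val ≤ c.val → c.val ≤ w.val → c ∈ S := by
      intro c hc1 hc2
      exact Finset.mem_coe.mp (walk_ivt p c hc1 hc2)
    have hSeq : S = pIntv n u.val (w.val + 1 - u.val) := by
      ext v
      rw [mem_pIntv]
      constructor
      · intro hv
        have := hbounds v hv
        omega
      · intro hv
        exact hin v hv.1 (by omega)
    have hwn : w.val < n := w.isLt
    have hcard2 : S.card = w.val + 1 - u.val := by
      rw [hSeq]; exact card_pIntv (by omega)
    have hk : k = w.val + 1 - u.val := by omega
    refine ⟨u.val, by omega, ?_⟩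
    rw [hSeq, hk]
  · rintro ⟨a, ha, rfl⟩
    have hak : a + k ≤ n := by omega
    refine ⟨card_pIntv hak, ⟨⟨?_, ?_⟩, pIntv_connected (by omega) hak⟩⟩
    · rw [← Finset.card_pos, card_pIntv hak]; omega
    · intro v hv
      rw [mem_pIntv] at hv
      have hnb : ∃ x ∈ pIntv n a k, (pathGraph n).Adj v x := by
        by_cases hvk : v.val + 1 < a + k
        · refine ⟨⟨v.val + 1, by omega⟩, ?_, ?_⟩
          · rw [mem_pIntv]; simp only [Fin.val_mk]; omega
          · rw [pathGraph_adj]; left; simp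
        · refine ⟨⟨v.val - 1, by omega⟩, ?_, ?_⟩
          · rw [mem_pIntv]; simp only [Fin.val_mk]; omega
          · rw [pathGraph_adj]; right; simp only [Fin.val_mk]; omega
      obtain ⟨x, hx, hadj⟩ := hnb
      calc degOf (pathGraph n) v ≤ 2 := degOf_le_two v
        _ = 2 * 1 := rfl
        _ ≤ 2 * degIn (pathGraph n) (pIntv n a k) v := by
            exact Nat.mul_le_mul_left 2 (degIn_pos hx hadj)

lemma aCoeff_eq {n k : ℕ} (h2 : 2 ≤ k) (hkn : k ≤ n) :
    aCoeff (pathGraph n) k = n + 1 - k := by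
  rw [aCoeff, count_set_eq h2 hkn]
  rw [Set.ncard_image_of_injOn]
  · have : (Set.Iio (n + 1 - k)) = ((Finset.Iio (n + 1 - k) : Finset ℕ) : Set ℕ) := by
      ext x; simp
    rw [this, Set.ncard_coe_finset, Nat.card_Iio]
  · intro a1 h1 a2 h22 heq
    simp only [Set.mem_Iio] at h1 h22
    have hm1 : (⟨a1, by omega⟩ : Fin n) ∈ pIntv n a1 k := by
      rw [mem_pIntv]; simp only [Fin.val_mk]; omega
    have hm2 : (⟨a2, by omega⟩ : Fin n) ∈ pIntv n a2 k := by
      rw [mem_pIntv]; simp only [Fin.val_mk]; omega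
    simp only [] at heq
    rw [heq] at hm1
    rw [← heq] at hm2
    rw [mem_pIntv] at hm1 hm2
    simp only [Fin.val_mk] at hm1 hm2
    omega

theorem stmt_8 (n : ℕ) (hn : 2 ≤ n) :
    aCoeff (SimpleGraph.pathGraph n) 1 = 0 ∧
    (∀ k : ℕ, 2 ≤ k → k ≤ n → aCoeff (SimpleGraph.pathGraph n) k = n + 1 - k) ∧
    alliancePoly (SimpleGraph.pathGraph n) =
      ∑ i ∈ Finset.Icc 2 n, Polynomial.C ((n + 1 - i : ℕ) : ℤ) * Polynomial.X ^ i := by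
  refine ⟨aCoeff_one hn, fun k hk hkn => aCoeff_eq hk hkn, ?_⟩
  rw [alliancePoly, Fintype.card_fin]
  rw [← Finset.sum_subset (s₁ := Finset.Icc 2 n) (s₂ := Finset.range (n + 1))
      (by intro x hx; simp only [Finset.mem_Icc] at hx; simp only [Finset.mem_range]; omega)
      (by
        intro x hx hnx
        simp only [Finset.mem_range] at hx
        simp only [Finset.mem_Icc] at hnx
        have hx01 : x = 0 ∨ x = 1 := by omega
        rcases hx01 with rfl | rfl
        · rw [aCoeff_zero]; simp
        · rw [aCoeff_one hn]; simp)]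
  apply Finset.sum_congr rfl
  intro i hi
  simp only [Finset.mem_Icc] at hi
  rw [aCoeff_eq hi.1 hi.2]
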